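/- Let h be a real antisymmetric (2n)×(2n) matrix and set A = Σ_{1 ≤ μ < ν ≤ 2n} h_{μν} c_μ c_ν. Then for every κ ∈ {0, 1, …, 2n} and every M ∈ B_κ, the conjugate exp(A) · M · exp(−A) also lies in B_κ; that is, each subspace B_κ is invariant under conjugation by exponentials of elements of the Lie algebra g = span_ℝ{c_μ c_ν : μ < ν}. -/

import Mathlib

open Matrix Complex
open scoped Kronecker

noncomputable section

abbrev QIdx (n : ℕ) := Fin n → Fin 2
abbrev NMat (n : ℕ) := Matrix (QIdx n) (QIdx n) ℂ
abbrev NMat2 (n : ℕ) := Matrix (QIdx n × QIdx n) (QIdx n × QIdx n) ℂ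

/-- The 2×2 Pauli X matrix. -/
def σX : Matrix (Fin 2) (Fin 2) ℂ := !![0, 1; 1, 0]
/-- The 2×2 Pauli Y matrix. -/
def σY : Matrix (Fin 2) (Fin 2) ℂ := !![0, -Complex.I; Complex.I, 0]
/-- The 2×2 Pauli Z matrix. -/
def σZ : Matrix (Fin 2) (Fin 2) ℂ := !![1, 0; 0, -1]

/-- Tensor (Kronecker) product of `n` one-qubit matrices, realized on index type `Fin n → Fin 2`. -/
def tensor {n : ℕ} (M : Fin n → Matrix (Fin 2) (Fin 2) ℂ) : NMat n :=
  Matrix.of fun f g => ∏ i, M i (f i) (g i)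

/-- The Jordan–Wigner Majorana operator `c_μ` (0-based index: `c_{2i} = Z^{⊗i} X I…`,
`c_{2i+1} = Z^{⊗i} Y I…`). -/
def majorana (n : ℕ) (μ : Fin (2 * n)) : NMat n :=
  tensor fun j =>
    if (j : ℕ) < (μ : ℕ) / 2 then σZ
    else if (j : ℕ) = (μ : ℕ) / 2 then (if (μ : ℕ) % 2 = 0 then σX else σY)
    else 1

/-- Ordered product `c^s` of the Majorana operators indexed by a subset `s`. -/
def cProd (n : ℕ) (s : Finset (Fin (2 * n))) : NMat n :=
  ((s.sort (· ≤ ·)).map (majorana n)).prod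

/-- The module `B_κ`: the complex span of products of `κ` distinct Majoranas. -/
def Bspace (n κ : ℕ) : Submodule ℂ (NMat n) :=
  Submodule.span ℂ {M | ∃ s : Finset (Fin (2 * n)), s.card = κ ∧ M = cProd n s}

/-- The Pauli string with `Z` on qubit `j` and identity elsewhere. -/
def pauliZ (n : ℕ) (j : Fin n) : NMat n := tensor fun k => if k = j then σZ else 1

/-- The Pauli string with `X` on qubits `j` and `j+1` and identity elsewhere. -/
def pauliXX (n : ℕ) (j : Fin n) : NMat n :=
  tensor fun k => if (k : ℕ) = (j : ℕ) ∨ (k : ℕ) = (j : ℕ) + 1 then σX else 1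

/-- The parity operator `P = Z^{⊗n}`. -/
def parity (n : ℕ) : NMat n := tensor fun _ => σZ


lemma tensor_mul {n : ℕ} (M N : Fin n → Matrix (Fin 2) (Fin 2) ℂ) :
    tensor M * tensor N = tensor fun i => M i * N i := by
  ext f g
  simp only [tensor, Matrix.of_apply, Matrix.mul_apply]
  rw [Finset.prod_univ_sum, Fintype.piFinset_univ]
  exact Finset.sum_congr rfl fun j _ => Finset.prod_mul_distrib.symm

lemma tensor_one {n : ℕ} : (tensor fun _ : Fin n => (1 : Matrix (Fin 2) (Fin 2) ℂ)) = 1 := by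
  ext f g
  simp only [tensor, Matrix.of_apply, Matrix.one_apply, Finset.prod_boole]
  simp [funext_iff]

lemma tensor_neg_of {n : ℕ} (P Q : Fin n → Matrix (Fin 2) (Fin 2) ℂ) (j0 : Fin n)
    (h0 : P j0 = -Q j0) (h : ∀ j, j ≠ j0 → P j = Q j) : tensor P = -tensor Q := by
  ext f g
  simp only [tensor, Matrix.of_apply, Matrix.neg_apply]
  rw [← Finset.prod_erase_mul _ _ (Finset.mem_univ j0),
      ← Finset.prod_erase_mul _ _ (Finset.mem_univ j0)]
  have he : ∀ j ∈ Finset.univ.erase j0, P j (f j) (g j) = Q j (f j) (g j) := fun j hj => by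
    rw [h j (Finset.mem_erase.1 hj).1]
  rw [Finset.prod_congr rfl he, h0]
  simp [mul_neg]

lemma σX_sq : σX * σX = 1 := by simp [σX, Matrix.mul_fin_two, Matrix.one_fin_two]
lemma σY_sq : σY * σY = 1 := by
  simp [σY, Matrix.mul_fin_two, Matrix.one_fin_two, Complex.I_mul_I]
lemma σZ_sq : σZ * σZ = 1 := by simp [σZ, Matrix.mul_fin_two, Matrix.one_fin_two]
lemma σXY : σX * σY = -(σY * σX) := by simp [σX, σY, Matrix.mul_fin_two]
lemma σYX : σY * σX = -(σX * σY) := by simp [σX, σY, Matrix.mul_fin_two]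
lemma σXZ : σX * σZ = -(σZ * σX) := by simp [σX, σZ, Matrix.mul_fin_two]
lemma σZX : σZ * σX = -(σX * σZ) := by simp [σX, σZ, Matrix.mul_fin_two]
lemma σYZ : σY * σZ = -(σZ * σY) := by simp [σY, σZ, Matrix.mul_fin_two]
lemma σZY : σZ * σY = -(σY * σZ) := by simp [σY, σZ, Matrix.mul_fin_two]

lemma majorana_sq {n : ℕ} (μ : Fin (2 * n)) : majorana n μ * majorana n μ = 1 := by
  rw [majorana, tensor_mul]
  have h : (fun j : Fin n =>
      (if (j:ℕ) < (μ:ℕ)/2 then σZ else if (j:ℕ) = (μ:ℕ)/2 then (if (μ:ℕ)%2=0 then σX else σY) else 1) *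
      (if (j:ℕ) < (μ:ℕ)/2 then σZ else if (j:ℕ) = (μ:ℕ)/2 then (if (μ:ℕ)%2=0 then σX else σY) else 1))
      = fun _ => (1 : Matrix (Fin 2) (Fin 2) ℂ) := by
    funext j; split_ifs <;> simp [σX_sq, σY_sq, σZ_sq]
  rw [h, tensor_one]

lemma majorana_anticomm {n : ℕ} {μ ν : Fin (2 * n)} (hne : μ ≠ ν) :
    majorana n μ * majorana n ν = -(majorana n ν * majorana n μ) := by
  have hμ := μ.isLt
  have hν := ν.isLt
  have hvne : (μ : ℕ) ≠ (ν : ℕ) := fun hc => hne (Fin.ext hc)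
  have hmin : min ((μ : ℕ) / 2) ((ν : ℕ) / 2) < n := by omega
  rw [majorana, majorana, tensor_mul, tensor_mul]
  apply tensor_neg_of _ _ ⟨min ((μ : ℕ) / 2) ((ν : ℕ) / 2), hmin⟩
  · beta_reduce
    simp only [Fin.val_mk]
    split_ifs <;> first
      | omega
      | exact σXY | exact σYX | exact σXZ | exact σZX | exact σYZ | exact σZY
      | simp
  · intro j hj
    have hj' : (j : ℕ) ≠ min ((μ : ℕ) / 2) ((ν : ℕ) / 2) := fun hc => hj (Fin.ext (by simpa using hc))
    beta_reduce
    split_ifs <;> first | rfl | omega | simp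

def mProd (n : ℕ) (l : List (Fin (2 * n))) : NMat n := (l.map (majorana n)).prod

lemma mProd_nil {n : ℕ} : mProd n [] = 1 := rfl

lemma mProd_cons {n : ℕ} (a : Fin (2 * n)) (l : List (Fin (2 * n))) :
    mProd n (a :: l) = majorana n a * mProd n l := by
  simp [mProd]

lemma cProd_eq {n : ℕ} (s : Finset (Fin (2 * n))) : cProd n s = mProd n (s.sort (· ≤ ·)) := rfl

/-- signed invariance of `mProd` under permutations -/
lemma mProd_perm {n : ℕ} {l₁ l₂ : List (Fin (2 * n))} (hp : l₁.Perm l₂) :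
    ∃ ε : ℂ, (ε = 1 ∨ ε = -1) ∧ mProd n l₁ = ε • mProd n l₂ := by
  induction hp with
  | nil => exact ⟨1, Or.inl rfl, by simp⟩
  | cons x _ ih =>
      obtain ⟨ε, hε, he⟩ := ih
      exact ⟨ε, hε, by rw [mProd_cons, mProd_cons, he, mul_smul_comm]⟩
  | swap x y l =>
      by_cases hxy : x = y
      · subst hxy; exact ⟨1, Or.inl rfl, by simp⟩
      · refine ⟨-1, Or.inr rfl, ?_⟩
        rw [mProd_cons, mProd_cons, mProd_cons, mProd_cons, ← mul_assoc, ← mul_assoc,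
          majorana_anticomm hxy]
        simp
  | trans _ _ ih₁ ih₂ =>
      obtain ⟨ε₁, hε₁, he₁⟩ := ih₁
      obtain ⟨ε₂, hε₂, he₂⟩ := ih₂
      refine ⟨ε₁ * ε₂, ?_, by rw [he₁, he₂, smul_smul]⟩
      rcases hε₁ with h | h <;> rcases hε₂ with h' | h' <;> simp [h, h']

lemma majorana_mul_cProd_insert {n : ℕ} {μ : Fin (2 * n)} {s : Finset (Fin (2 * n))}
    (hμ : μ ∉ s) : ∃ ε : ℂ, (ε = 1 ∨ ε = -1) ∧
      majorana n μ * cProd n s = ε • cProd n (insert μ s) := by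
  have hp : (μ :: s.sort (· ≤ ·)).Perm ((insert μ s).sort (· ≤ ·)) := by
    refine ((List.Perm.cons μ (Finset.sort_perm_toList s _)).trans ?_).trans
      ((insert μ s).sort_perm_toList _).symm
    exact (Finset.toList_insert hμ).symm
  obtain ⟨ε, hε, he⟩ := mProd_perm hp
  exact ⟨ε, hε, by rw [cProd_eq, ← mProd_cons, he, ← cProd_eq]⟩

lemma majorana_mul_cProd_erase {n : ℕ} {μ : Fin (2 * n)} {s : Finset (Fin (2 * n))}
    (hμ : μ ∈ s) : ∃ ε : ℂ, (ε = 1 ∨ ε = -1) ∧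
      majorana n μ * cProd n s = ε • cProd n (s.erase μ) := by
  obtain ⟨ε, hε, he⟩ := majorana_mul_cProd_insert (Finset.notMem_erase μ s)
  rw [Finset.insert_erase hμ] at he
  have hε2 : ε * ε = 1 := by rcases hε with h | h <;> simp [h]
  refine ⟨ε, hε, ?_⟩
  have : cProd n s = ε • (majorana n μ * cProd n (s.erase μ)) := by
    rw [he, smul_smul, hε2, one_smul]
  rw [this, mul_smul_comm, ← mul_assoc, majorana_sq, one_mul]

/-- moving a single majorana through a product costs a sign for each distinct factor -/
lemma majorana_mul_mProd {n : ℕ} (μ : Fin (2 * n)) (l : List (Fin (2 * n))) :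
    majorana n μ * mProd n l
      = ((-1 : ℂ) ^ (l.countP fun x => x ≠ μ)) • (mProd n l * majorana n μ) := by
  induction l with
  | nil => simp [mProd_nil]
  | cons a t ih =>
      by_cases ha : a = μ
      · subst ha
        have hc : (a :: t).countP (fun x => x ≠ a) = t.countP (fun x => x ≠ a) := by
          simp [List.countP_cons]
        rw [hc, mProd_cons]
        conv_lhs => rw [ih]
        rw [mul_smul_comm, mul_assoc]
      · have hμa : μ ≠ a := fun hc => ha hc.symm
        have hc : (a :: t).countP (fun x => x ≠ μ) = t.countP (fun x => x ≠ μ) + 1 := by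
          simp [List.countP_cons, ha]
        rw [hc, mProd_cons, ← mul_assoc, majorana_anticomm hμa, neg_mul, mul_assoc, ih,
          mul_smul_comm, pow_succ, mul_neg_one, neg_smul, mul_assoc]

lemma countP_ne_of_nodup {α : Type*} [DecidableEq α] (a : α) {l : List α} (h : l.Nodup) :
    l.countP (fun x => x ≠ a) = l.length - (if a ∈ l then 1 else 0) := by
  induction l with
  | nil => simp
  | cons b t ih =>
      rw [List.nodup_cons] at h
      have ih' := ih h.2
      by_cases hba : b = a
      · have hat : a ∉ t := by rw [← hba]; exact h.1
        have h1 : a ∈ b :: t := by rw [hba]; exact List.mem_cons_self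
        rw [List.countP_cons, ih', if_neg hat, if_pos h1, List.length_cons]
        simp [hba]
      · have h2 : (a ∈ b :: t) ↔ a ∈ t := by
          rw [List.mem_cons]
          constructor
          · rintro (rfl | hx)
            · exact absurd rfl (fun hc => hba hc.symm)
            · exact hx
          · exact Or.inr
        rw [List.countP_cons, ih', List.length_cons, if_congr h2 rfl rfl]
        have h3 : (if (fun x => decide (x ≠ a)) b = true then 1 else 0) = 1 := by simp [hba]
        rw [h3]
        split_ifs with hm
        · have : 1 ≤ t.length := List.length_pos_iff.mpr (List.ne_nil_of_mem hm)
          omega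
        · omega

lemma mProd_mul_majorana {n : ℕ} (μ : Fin (2 * n)) (l : List (Fin (2 * n))) :
    mProd n l * majorana n μ
      = ((-1 : ℂ) ^ (l.countP fun x => x ≠ μ)) • (majorana n μ * mProd n l) := by
  rw [majorana_mul_mProd, smul_smul, ← pow_add]
  rw [Even.neg_one_pow ⟨_, rfl⟩, one_smul]

lemma cProd_mem {n κ : ℕ} {s : Finset (Fin (2 * n))} (h : s.card = κ) :
    cProd n s ∈ Bspace n κ :=
  Submodule.subset_span ⟨s, h, rfl⟩

lemma pair_mul_cProd_mem {n : ℕ} {μ ν : Fin (2 * n)} {s : Finset (Fin (2 * n))}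
    (hμν : μ ≠ ν) (hs : (μ ∈ s ∧ ν ∉ s) ∨ (μ ∉ s ∧ ν ∈ s)) :
    majorana n μ * majorana n ν * cProd n s ∈ Bspace n s.card := by
  rcases hs with ⟨hμs, hνs⟩ | ⟨hμs, hνs⟩
  · obtain ⟨ε₁, hε₁, he₁⟩ := majorana_mul_cProd_insert hνs
    have hμ' : μ ∈ insert ν s := Finset.mem_insert_of_mem hμs
    obtain ⟨ε₂, hε₂, he₂⟩ := majorana_mul_cProd_erase hμ'
    have hcard : ((insert ν s).erase μ).card = s.card := by
      rw [Finset.card_erase_of_mem hμ', Finset.card_insert_of_notMem hνs]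
      omega
    rw [mul_assoc, he₁, mul_smul_comm, he₂, smul_smul]
    exact Submodule.smul_mem _ _ (cProd_mem hcard)
  · obtain ⟨ε₁, hε₁, he₁⟩ := majorana_mul_cProd_erase hνs
    have hμ' : μ ∉ s.erase ν := fun hc => hμs (Finset.mem_of_mem_erase hc)
    obtain ⟨ε₂, hε₂, he₂⟩ := majorana_mul_cProd_insert hμ'
    have hcard : (insert μ (s.erase ν)).card = s.card := by
      rw [Finset.card_insert_of_notMem hμ', Finset.card_erase_of_mem hνs]
      have : 1 ≤ s.card := Finset.card_pos.mpr ⟨ν, hνs⟩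
      omega
    rw [mul_assoc, he₁, mul_smul_comm, he₂, smul_smul]
    exact Submodule.smul_mem _ _ (cProd_mem hcard)

lemma pair_comm_mem {n : ℕ} (μ ν : Fin (2 * n)) (s : Finset (Fin (2 * n))) :
    majorana n μ * majorana n ν * cProd n s - cProd n s * (majorana n μ * majorana n ν)
      ∈ Bspace n s.card := by
  by_cases hμν : μ = ν
  · subst hμν
    rw [majorana_sq, one_mul, mul_one, sub_self]
    exact zero_mem _
  have key : cProd n s * (majorana n μ * majorana n ν)
      = ((-1 : ℂ) ^ (((s.sort (· ≤ ·)).countP fun x => x ≠ μ)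
          + ((s.sort (· ≤ ·)).countP fun x => x ≠ ν)))
        • (majorana n μ * majorana n ν * cProd n s) := by
    rw [cProd_eq, ← mul_assoc, mProd_mul_majorana, smul_mul_assoc, mul_assoc,
      mProd_mul_majorana, mul_smul_comm, smul_smul, ← pow_add, mul_assoc]
  set kμ := (s.sort (· ≤ ·)).countP fun x => x ≠ μ with hkμ
  set kν := (s.sort (· ≤ ·)).countP fun x => x ≠ ν with hkν
  by_cases hpar : Even (kμ + kν)
  · rw [key, hpar.neg_one_pow, one_smul, sub_self]
    exact zero_mem _
  · have hodd : Odd (kμ + kν) := Nat.odd_iff.mpr (by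
      rcases Nat.even_or_odd (kμ + kν) with he | ho
      · exact absurd he hpar
      · exact Nat.odd_iff.mp ho)
    rw [key, hodd.neg_one_pow, neg_one_smul, sub_neg_eq_add]
    have hnd := s.sort_nodup (· ≤ ·)
    have hμc : kμ = (s.sort (· ≤ ·)).length - (if μ ∈ s then 1 else 0) := by
      rw [hkμ, countP_ne_of_nodup μ hnd]
      simp [Finset.mem_sort]
    have hνc : kν = (s.sort (· ≤ ·)).length - (if ν ∈ s then 1 else 0) := by
      rw [hkν, countP_ne_of_nodup ν hnd]
      simp [Finset.mem_sort]
    have hcases : (μ ∈ s ∧ ν ∉ s) ∨ (μ ∉ s ∧ ν ∈ s) := by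
      have hodd' := Nat.odd_iff.mp hodd
      by_cases h1 : μ ∈ s <;> by_cases h2 : ν ∈ s
      · exfalso
        have hl : 1 ≤ (s.sort (· ≤ ·)).length :=
          List.length_pos_iff.mpr (List.ne_nil_of_mem ((Finset.mem_sort (· ≤ ·)).mpr h1))
        rw [if_pos h1] at hμc
        rw [if_pos h2] at hνc
        omega
      · exact Or.inl ⟨h1, h2⟩
      · exact Or.inr ⟨h1, h2⟩
      · exfalso
        rw [if_neg h1] at hμc
        rw [if_neg h2] at hνc
        omega
    have hX := pair_mul_cProd_mem hμν hcases
    exact add_mem hX hX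

lemma adA_mem {n κ : ℕ} {A : NMat n}
    (hgen : ∀ s : Finset (Fin (2 * n)), A * cProd n s - cProd n s * A ∈ Bspace n s.card)
    {M : NMat n} (hM : M ∈ Bspace n κ) : A * M - M * A ∈ Bspace n κ := by
  induction hM using Submodule.span_induction with
  | mem x hx =>
      obtain ⟨s, hs, rfl⟩ := hx
      exact hs ▸ hgen s
  | zero => simpa using zero_mem _
  | add x y hx hy ihx ihy =>
      have hr : A * (x + y) - (x + y) * A = (A * x - x * A) + (A * y - y * A) := by
        noncomm_ring
      rw [hr]; exact add_mem ihx ihy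
  | smul a x hx ihx =>
      have hr : A * (a • x) - (a • x) * A = a • (A * x - x * A) := by
        rw [mul_smul_comm, smul_mul_assoc, smul_sub]
      rw [hr]; exact Submodule.smul_mem _ _ ihx

lemma hgenA {n : ℕ} (g : Fin (2 * n) → Fin (2 * n) → ℂ) (s : Finset (Fin (2 * n))) :
    (∑ μ : Fin (2 * n), ∑ ν : Fin (2 * n),
        if μ < ν then g μ ν • (majorana n μ * majorana n ν) else 0) * cProd n s
      - cProd n s * (∑ μ : Fin (2 * n), ∑ ν : Fin (2 * n),
        if μ < ν then g μ ν • (majorana n μ * majorana n ν) else 0) ∈ Bspace n s.card := by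
  rw [Finset.sum_mul, Finset.mul_sum, ← Finset.sum_sub_distrib]
  refine Submodule.sum_mem _ fun μ _ => ?_
  rw [Finset.sum_mul, Finset.mul_sum, ← Finset.sum_sub_distrib]
  refine Submodule.sum_mem _ fun ν _ => ?_
  split_ifs with hlt
  · rw [smul_mul_assoc, mul_smul_comm, ← smul_sub]
    exact Submodule.smul_mem _ _ (pair_comm_mem μ ν s)
  · simp

section Analysis

noncomputable abbrev nmatNormedRing {n : ℕ} : NormedRing (NMat n) :=
  { (Matrix.linftyOpNormedRing : NormedRing (NMat n)) with
    toPseudoMetricSpace :=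
      (Matrix.linftyOpNormedRing : NormedRing (NMat n)).toPseudoMetricSpace.replaceUniformity rfl }
attribute [local instance] nmatNormedRing
noncomputable abbrev nmatNormedAlgebra {n : ℕ} : NormedAlgebra ℂ (NMat n) :=
  { (Matrix.linftyOpNormedAlgebra : @NormedAlgebra ℂ (NMat n) _ Matrix.linftyOpSemiNormedRing) with }
attribute [local instance] nmatNormedAlgebra

variable {n : ℕ}

instance instTopRingNMatCLM : IsTopologicalRing (NMat n →L[ℂ] NMat n) :=
  @NonUnitalSeminormedRing.toIsTopologicalRing (NMat n →L[ℂ] NMat n) _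

lemma exp_left_apply (A M : NMat n) :
    NormedSpace.exp (LinearMap.toContinuousLinearMap (LinearMap.mulLeft ℂ A)) M
      = NormedSpace.exp A * M := by
  have hpow : ∀ k : ℕ,
      ((LinearMap.toContinuousLinearMap (LinearMap.mulLeft ℂ A)) ^ k) M = A ^ k * M := by
    intro k
    induction k with
    | zero => simp
    | succ k ih =>
        rw [pow_succ', ContinuousLinearMap.mul_apply, ih]
        simp [LinearMap.coe_toContinuousLinearMap', pow_succ', mul_assoc]
  rw [NormedSpace.exp_eq_tsum ℂ]
  beta_reduce
  have h1 := (ContinuousLinearMap.apply ℂ (NMat n) M).map_tsum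
    (NormedSpace.expSeries_summable' (𝕂 := ℂ)
      (LinearMap.toContinuousLinearMap (LinearMap.mulLeft ℂ A)))
  simp only [ContinuousLinearMap.apply_apply, ContinuousLinearMap.smul_apply, hpow] at h1
  rw [h1, NormedSpace.exp_eq_tsum ℂ]
  have h2 := (LinearMap.toContinuousLinearMap (LinearMap.mulRight ℂ M)).map_tsum
    (NormedSpace.expSeries_summable' (𝕂 := ℂ) A)
  simpa [LinearMap.coe_toContinuousLinearMap', LinearMap.mulRight_apply, smul_mul_assoc]
    using h2.symm

lemma exp_right_apply (A M : NMat n) :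
    NormedSpace.exp (LinearMap.toContinuousLinearMap (LinearMap.mulRight ℂ A)) M
      = M * NormedSpace.exp A := by
  have hpow : ∀ k : ℕ,
      ((LinearMap.toContinuousLinearMap (LinearMap.mulRight ℂ A)) ^ k) M = M * A ^ k := by
    intro k
    induction k with
    | zero => simp
    | succ k ih =>
        rw [pow_succ', ContinuousLinearMap.mul_apply, ih]
        simp [LinearMap.coe_toContinuousLinearMap', pow_succ, mul_assoc]
  rw [NormedSpace.exp_eq_tsum ℂ]
  beta_reduce
  have h1 := (ContinuousLinearMap.apply ℂ (NMat n) M).map_tsum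
    (NormedSpace.expSeries_summable' (𝕂 := ℂ)
      (LinearMap.toContinuousLinearMap (LinearMap.mulRight ℂ A)))
  simp only [ContinuousLinearMap.apply_apply, ContinuousLinearMap.smul_apply, hpow] at h1
  rw [h1, NormedSpace.exp_eq_tsum ℂ]
  have h2 := (LinearMap.toContinuousLinearMap (LinearMap.mulLeft ℂ M)).map_tsum
    (NormedSpace.expSeries_summable' (𝕂 := ℂ) A)
  simpa [LinearMap.coe_toContinuousLinearMap', LinearMap.mulLeft_apply, mul_smul_comm]
    using h2.symm

lemma exp_conj_mem {κ : ℕ} (A : NMat n)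
    (hgen : ∀ s : Finset (Fin (2 * n)), A * cProd n s - cProd n s * A ∈ Bspace n s.card)
    (M : NMat n) (hM : M ∈ Bspace n κ) :
    NormedSpace.exp A * M * NormedSpace.exp (-A) ∈ Bspace n κ := by
  set lA := LinearMap.toContinuousLinearMap (LinearMap.mulLeft ℂ A) with hlA
  set rA := LinearMap.toContinuousLinearMap (LinearMap.mulRight ℂ A) with hrA
  have happly : ∀ X : NMat n, (lA - rA) X = A * X - X * A := by
    intro X
    simp [hlA, hrA, ContinuousLinearMap.sub_apply]
  have hcomm : Commute lA (-rA) := by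
    show lA * -rA = -rA * lA
    refine ContinuousLinearMap.ext fun X => ?_
    simp [hlA, hrA, ContinuousLinearMap.mul_apply, LinearMap.coe_toContinuousLinearMap',
      mul_assoc]
  have hneg : -rA = LinearMap.toContinuousLinearMap (LinearMap.mulRight ℂ (-A)) := by
    refine ContinuousLinearMap.ext fun X => ?_
    simp [hrA]
  have hkey : NormedSpace.exp A * M * NormedSpace.exp (-A)
      = NormedSpace.exp (lA - rA) M := by
    let +nondep : NormedAlgebra ℚ (NMat n →L[ℂ] NMat n) := .restrictScalars ℚ ℂ _
    rw [sub_eq_add_neg, NormedSpace.exp_add_of_commute (𝔸 := NMat n →L[ℂ] NMat n) hcomm,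
      ContinuousLinearMap.mul_apply,
      hneg, exp_right_apply, exp_left_apply, mul_assoc]
  rw [hkey]
  have hsum : HasSum (fun k : ℕ => (k.factorial⁻¹ : ℂ) • ((lA - rA) ^ k))
      (NormedSpace.exp (lA - rA)) := by
    rw [NormedSpace.exp_eq_tsum ℂ]
    exact (NormedSpace.expSeries_summable' (𝕂 := ℂ) (lA - rA)).hasSum
  have hsum2 := (ContinuousLinearMap.apply ℂ (NMat n) M).hasSum hsum
  simp only [ContinuousLinearMap.apply_apply, ContinuousLinearMap.smul_apply] at hsum2
  have hmem : ∀ k : ℕ, ((lA - rA) ^ k) M ∈ Bspace n κ := by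
    intro k
    induction k with
    | zero => simpa using hM
    | succ k ih =>
        rw [pow_succ', ContinuousLinearMap.mul_apply, happly]
        exact adA_mem hgen ih
  have hclosed : IsClosed ((Bspace n κ : Set (NMat n))) :=
    Submodule.closed_of_finiteDimensional _
  exact hclosed.mem_of_tendsto hsum2 (Filter.Eventually.of_forall fun t =>
    Submodule.sum_mem _ fun k _ => Submodule.smul_mem _ _ (hmem k))

end Analysis

/-- Each module `B_κ` is invariant under conjugation by exponentials of elements
`A = Σ_{μ<ν} h_{μν} c_μ c_ν` of the Lie algebra `g = span_ℝ {c_μ c_ν : μ < ν}`. -/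
theorem Bspace_invariant_exp_conj (n : ℕ) (hn : 1 ≤ n)
    (h : Matrix (Fin (2 * n)) (Fin (2 * n)) ℝ) (hanti : ∀ μ ν, h ν μ = - h μ ν)
    (A : NMat n)
    (hA : A = ∑ μ : Fin (2 * n), ∑ ν : Fin (2 * n),
      if μ < ν then (h μ ν : ℂ) • (majorana n μ * majorana n ν) else 0)
    (κ : ℕ) (hκ : κ ≤ 2 * n) (M : NMat n) (hM : M ∈ Bspace n κ) :
    NormedSpace.exp A * M * NormedSpace.exp (-A) ∈ Bspace n κ := by
  refine exp_conj_mem A (fun s => ?_) M hM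
  rw [hA]
  exact hgenA (fun μ ν => (h μ ν : ℂ)) s

end
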